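/- If the set of atoms of μ_b is not contained in the set of atoms of μ_s, then α₀ = α. If the set of atoms of μ_b is contained in the set of atoms of μ_s, then α₀ = α·(1 − inf{μ_s({x})/μ_b({x}) : x an atom of μ_b}); in particular, in this case α₀ = α if and only if inf{μ_s({x})/μ_b({x}) : x an atom of μ_b} = 0. -/

import Mathlib

open Filter Topology

/-- A cumulative distribution function: non-decreasing, right-continuous,
tending to 0 at -∞ and to 1 at +∞. -/
def IsCDF (G : ℝ → ℝ) : Prop :=
  Monotone G ∧ (∀ x : ℝ, ContinuousWithinAt G (Set.Ici x) x) ∧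
    Tendsto G atBot (𝓝 0) ∧ Tendsto G atTop (𝓝 1)

/-- The identifiable mixing proportion α₀. -/
noncomputable def alpha0 (F Fb : ℝ → ℝ) : ℝ :=
  sInf {γ : ℝ | γ ∈ Set.Ioc (0 : ℝ) 1 ∧
    IsCDF (fun x => (F x - (1 - γ) * Fb x) / γ)}

open MeasureTheory


lemma measure_countable_tsum (μ : Measure ℝ) {s : Set ℝ} (hs : s.Countable) :
    μ s = ∑' x : s, μ {(x : ℝ)} := by
  have h : s = ⋃ x ∈ s, {x} := by simp
  conv_lhs => rw [h]
  exact measure_biUnion hs (fun x _ y _ hxy => Set.disjoint_singleton.mpr hxy)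
    (fun b _ => measurableSet_singleton b)

lemma atoms_countable (μ : Measure ℝ) [IsFiniteMeasure μ] :
    Set.Countable {x : ℝ | 0 < μ {x}} := by
  have := MeasureTheory.Measure.countable_meas_level_set_pos (μ := μ) (g := id) measurable_id
  simpa [Set.setOf_eq_eq_singleton] using this

lemma isCDF_toReal_Iic (μ : Measure ℝ) [IsProbabilityMeasure μ] :
    IsCDF (fun x => (μ (Set.Iic x)).toReal) := by
  have h : (fun x => (μ (Set.Iic x)).toReal) = (ProbabilityTheory.cdf μ : ℝ → ℝ) := by
    funext x; rw [ProbabilityTheory.cdf_eq_real, measureReal_def]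
  rw [h]
  exact ⟨ProbabilityTheory.monotone_cdf μ, (ProbabilityTheory.cdf μ).right_continuous,
    ProbabilityTheory.tendsto_cdf_atBot μ, ProbabilityTheory.tendsto_cdf_atTop μ⟩

lemma toReal_Iic_diff (μ : Measure ℝ) [IsFiniteMeasure μ] {x y : ℝ} (h : x ≤ y) :
    (μ (Set.Iic y)).toReal - (μ (Set.Iic x)).toReal = (μ (Set.Ioc x y)).toReal := by
  rw [← Set.Iic_sdiff_Iic,
    measure_diff (Set.Iic_subset_Iic.mpr h) measurableSet_Iic.nullMeasurableSet (measure_ne_top μ _),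
    ENNReal.toReal_sub_of_le (measure_mono (Set.Iic_subset_Iic.mpr h)) (measure_ne_top μ _)]

lemma singleton_eq_iInter (b : ℝ) : (⋂ n : ℕ, Set.Ioc (b - 1/(n+1)) b) = {b} := by
  ext x
  simp only [Set.mem_iInter, Set.mem_Ioc, Set.mem_singleton_iff]
  constructor
  · intro h
    refine le_antisymm (h 0).2 ?_
    by_contra hxb
    push_neg at hxb
    obtain ⟨n, hn⟩ := exists_nat_one_div_lt (sub_pos.mpr hxb)
    have := (h n).1
    linarith
  · rintro rfl
    intro n
    have : (0:ℝ) < 1/(n+1) := by positivity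
    constructor <;> linarith

lemma key_iff (μs μb : Measure ℝ) [IsProbabilityMeasure μs] [IsProbabilityMeasure μb]
    (hatomic_b : μb {x : ℝ | 0 < μb {x}}ᶜ = 0)
    (α γ : ℝ) (hα : 0 < α) (hγ : 0 < γ) :
    IsCDF (fun x => (α * (μs (Set.Iic x)).toReal + (γ - α) * (μb (Set.Iic x)).toReal) / γ) ↔
      ∀ b ∈ {x : ℝ | 0 < μb {x}}, (α - γ) * (μb {b}).toReal ≤ α * (μs {b}).toReal := by
  set B := {x : ℝ | 0 < μb {x}} with hBdef
  have hBc : B.Countable := atoms_countable μb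
  have hs := isCDF_toReal_Iic μs
  have hb := isCDF_toReal_Iic μb
  set fs : ℝ → ℝ := fun x => (μs (Set.Iic x)).toReal with hfs
  set fb : ℝ → ℝ := fun x => (μb (Set.Iic x)).toReal with hfb
  -- monotonicity is the only nontrivial condition
  have hmono_iff : Monotone (fun x => (α * fs x + (γ - α) * fb x) / γ) ↔
      ∀ x y : ℝ, x ≤ y → 0 ≤ α * (μs (Set.Ioc x y)).toReal + (γ - α) * (μb (Set.Ioc x y)).toReal := by
    constructor
    · intro h x y hxy
      have h2 := h hxy
      rw [div_le_div_iff_of_pos_right hγ] at h2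
      have e1 := toReal_Iic_diff μs hxy
      have e2 := toReal_Iic_diff μb hxy
      simp only [hfs, hfb] at h2 ⊢
      nlinarith
    · intro h x y hxy
      have h2 := h x y hxy
      have e1 := toReal_Iic_diff μs hxy
      have e2 := toReal_Iic_diff μb hxy
      rw [div_le_div_iff_of_pos_right hγ]
      simp only [hfs, hfb]
      nlinarith
  constructor
  · rintro ⟨hm, -, -, -⟩ b hbB
    rw [hmono_iff] at hm
    -- take limits along Ioc (b - 1/(n+1)) b
    have hlim : ∀ (μ : Measure ℝ) [IsProbabilityMeasure μ],
        Tendsto (fun n : ℕ => (μ (Set.Ioc (b - 1/(n+1)) b)).toReal) atTop (𝓝 ((μ {b}).toReal)) := by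
      intro μ _
      have hanti : Antitone (fun n : ℕ => Set.Ioc (b - 1/(n+1)) b) := by
        intro n m hnm
        apply Set.Ioc_subset_Ioc_left
        have h1 : (0:ℝ) < n + 1 := by positivity
        have : (1:ℝ)/(m+1) ≤ 1/(n+1) := by
          apply one_div_le_one_div_of_le h1
          exact_mod_cast by omega
        linarith
      have ht := tendsto_measure_iInter_atTop
        (fun n => measurableSet_Ioc.nullMeasurableSet) hanti ⟨0, measure_ne_top μ _⟩
      rw [singleton_eq_iInter b] at ht
      exact (ENNReal.tendsto_toReal (measure_ne_top μ _)).comp ht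
    have hcomb : Tendsto (fun n : ℕ => α * (μs (Set.Ioc (b - 1/(n+1)) b)).toReal
        + (γ - α) * (μb (Set.Ioc (b - 1/(n+1)) b)).toReal) atTop
        (𝓝 (α * (μs {b}).toReal + (γ - α) * (μb {b}).toReal)) :=
      ((hlim μs).const_mul α).add ((hlim μb).const_mul (γ - α))
    have hge : 0 ≤ α * (μs {b}).toReal + (γ - α) * (μb {b}).toReal := by
      refine ge_of_tendsto' hcomb fun n => ?_
      apply hm
      have : (0:ℝ) < 1/(n+1) := by positivity
      linarith
    linarith
  · intro hcond
    refine ⟨?_, ?_, ?_, ?_⟩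
    · rw [hmono_iff]
      intro x y hxy
      set E := Set.Ioc x y with hE
      rcases le_or_gt α γ with hle | hlt
      · have := ENNReal.toReal_nonneg (a := μs E)
        have := ENNReal.toReal_nonneg (a := μb E)
        nlinarith
      · -- need (α - γ) * μb E ≤ α * μs E
        have hkey : (α - γ) * (μb E).toReal ≤ α * (μs E).toReal := by
          have hαγ : (0:ℝ) ≤ α - γ := by linarith
          have hBm : MeasurableSet B := hBc.measurableSet
          have hEB : μb E = μb (E ∩ B) := by
            have h1 : μb (E ∩ B) + μb (E \ B) = μb E := measure_inter_add_diff E hBm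
            have h2 : μb (E \ B) = 0 :=
              le_antisymm (le_trans (measure_mono (Set.diff_subset_compl E B)) hatomic_b.le)
                zero_le
            rw [← h1, h2, add_zero]
          have hEBc : (E ∩ B).Countable := hBc.mono Set.inter_subset_right
          have hineq : ENNReal.ofReal (α - γ) * μb E ≤ ENNReal.ofReal α * μs E := by
            rw [hEB, measure_countable_tsum μb hEBc, ← ENNReal.tsum_mul_left]
            calc ∑' x : ↑(E ∩ B), ENNReal.ofReal (α - γ) * μb {(x:ℝ)}
                ≤ ∑' x : ↑(E ∩ B), ENNReal.ofReal α * μs {(x:ℝ)} := by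
                  apply ENNReal.tsum_le_tsum
                  intro z
                  have hz := hcond z z.2.2
                  rw [← ENNReal.ofReal_toReal (measure_ne_top μb {(z:ℝ)}),
                    ← ENNReal.ofReal_toReal (measure_ne_top μs {(z:ℝ)}),
                    ← ENNReal.ofReal_mul hαγ, ← ENNReal.ofReal_mul hα.le]
                  exact ENNReal.ofReal_le_ofReal hz
              _ = ENNReal.ofReal α * μs (E ∩ B) := by
                  rw [measure_countable_tsum μs hEBc, ENNReal.tsum_mul_left]
              _ ≤ ENNReal.ofReal α * μs E := by
                  gcongr
                  exact Set.inter_subset_left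
          have hfin : ENNReal.ofReal α * μs E ≠ ⊤ :=
            ENNReal.mul_ne_top ENNReal.ofReal_ne_top (measure_ne_top μs E)
          have := ENNReal.toReal_mono hfin hineq
          rwa [ENNReal.toReal_mul, ENNReal.toReal_mul, ENNReal.toReal_ofReal hαγ,
            ENNReal.toReal_ofReal hα.le] at this
        linarith
    · intro x
      exact (((hs.2.1 x).const_mul α).add ((hb.2.1 x).const_mul (γ - α))).div_const γ
    · have := ((hs.2.2.1.const_mul α).add (hb.2.2.1.const_mul (γ - α))).div_const γ
      simpa using this
    · have h1 := ((hs.2.2.2.const_mul α).add (hb.2.2.2.const_mul (γ - α))).div_const γ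
      have : (α * 1 + (γ - α) * 1) / γ = 1 := by field_simp; ring
      rwa [this] at h1

lemma cdf_eq_of_ge_on_atoms (μs μb : Measure ℝ) [IsProbabilityMeasure μs] [IsProbabilityMeasure μb]
    (hatomic_b : μb {x : ℝ | 0 < μb {x}}ᶜ = 0)
    (h : ∀ b ∈ {x : ℝ | 0 < μb {x}}, μb {b} ≤ μs {b}) :
    (fun x => (μs (Set.Iic x)).toReal) = (fun x => (μb (Set.Iic x)).toReal) := by
  set B := {x : ℝ | 0 < μb {x}} with hBdef
  have hBc : B.Countable := atoms_countable μb
  have hBm : MeasurableSet B := hBc.measurableSet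
  have hμbB : μb B = 1 := by
    have := measure_add_measure_compl (μ := μb) hBm
    rw [hatomic_b, add_zero, measure_univ] at this
    exact this
  have htb : μb B = ∑' x : ↑B, μb {(x:ℝ)} := measure_countable_tsum μb hBc
  have hts : μs B = ∑' x : ↑B, μs {(x:ℝ)} := measure_countable_tsum μs hBc
  have hμsB : μs B = 1 := by
    refine le_antisymm prob_le_one ?_
    rw [← hμbB, htb, hts]
    exact ENNReal.tsum_le_tsum fun z => h z z.2
  -- pointwise equality on B
  have hpt : ∀ b ∈ B, μs {b} = μb {b} := by
    intro b hbB
    by_contra hne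
    have hlt : μb {b} < μs {b} := lt_of_le_of_ne (h b hbB) (fun e => hne e.symm)
    have : μb B < μs B := by
      rw [htb, hts]
      exact ENNReal.tsum_lt_tsum (i := ⟨b, hbB⟩) (by rw [← htb, hμbB]; exact ENNReal.one_ne_top)
        (fun z => h z z.2) hlt
    rw [hμbB, hμsB] at this
    exact lt_irrefl _ this
  -- μs of Bᶜ is 0
  have hμsBc : μs Bᶜ = 0 := by
    have h1 := measure_add_measure_compl (μ := μs) hBm
    rw [hμsB, measure_univ] at h1
    have h2 : (1 : ENNReal) + μs Bᶜ = 1 + 0 := by rw [add_zero]; exact h1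
    exact (ENNReal.add_right_inj ENNReal.one_ne_top).mp h2
  funext x
  congr 1
  have hes : μs (Set.Iic x) = μs (Set.Iic x ∩ B) := by
    have h1 : μs (Set.Iic x ∩ B) + μs (Set.Iic x \ B) = μs (Set.Iic x) :=
      measure_inter_add_diff _ hBm
    have h2 : μs (Set.Iic x \ B) = 0 :=
      le_antisymm (le_trans (measure_mono (Set.diff_subset_compl _ _)) hμsBc.le) zero_le
    rw [← h1, h2, add_zero]
  have heb : μb (Set.Iic x) = μb (Set.Iic x ∩ B) := by
    have h1 : μb (Set.Iic x ∩ B) + μb (Set.Iic x \ B) = μb (Set.Iic x) :=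
      measure_inter_add_diff _ hBm
    have h2 : μb (Set.Iic x \ B) = 0 :=
      le_antisymm (le_trans (measure_mono (Set.diff_subset_compl _ _)) hatomic_b.le) zero_le
    rw [← h1, h2, add_zero]
  have hc : (Set.Iic x ∩ B).Countable := hBc.mono Set.inter_subset_right
  rw [hes, heb, measure_countable_tsum μs hc, measure_countable_tsum μb hc]
  exact tsum_congr fun z => hpt z z.2.2

/-- Lemma 3: identifiability when both components are discrete (purely atomic)
probability measures. -/
theorem alpha0_discrete
    (μs μb : Measure ℝ) [IsProbabilityMeasure μs] [IsProbabilityMeasure μb]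
    (hatomic_s : μs {x : ℝ | 0 < μs {x}}ᶜ = 0)
    (hatomic_b : μb {x : ℝ | 0 < μb {x}}ᶜ = 0)
    (Fs Fb : ℝ → ℝ)
    (hFs : Fs = fun x => (μs (Set.Iic x)).toReal)
    (hFb : Fb = fun x => (μb (Set.Iic x)).toReal)
    (hne : Fs ≠ Fb)
    (α : ℝ) (hα : α ∈ Set.Ioc (0 : ℝ) 1)
    (F : ℝ → ℝ) (hF : F = fun x => α * Fs x + (1 - α) * Fb x) :
    (¬ ({x : ℝ | 0 < μb {x}} ⊆ {x : ℝ | 0 < μs {x}}) → alpha0 F Fb = α) ∧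
    (({x : ℝ | 0 < μb {x}} ⊆ {x : ℝ | 0 < μs {x}}) →
      alpha0 F Fb =
        α * (1 - sInf ((fun x => (μs {x}).toReal / (μb {x}).toReal) ''
          {x : ℝ | 0 < μb {x}})) ∧
      (alpha0 F Fb = α ↔
        sInf ((fun x => (μs {x}).toReal / (μb {x}).toReal) ''
          {x : ℝ | 0 < μb {x}}) = 0)) := by
  have hfeq : ∀ γ : ℝ, (fun x => (F x - (1 - γ) * Fb x) / γ)
      = (fun x => (α * (μs (Set.Iic x)).toReal + (γ - α) * (μb (Set.Iic x)).toReal) / γ) := by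
    intro γ; funext x; simp only [hF, hFs, hFb]; ring
  have hchar : ∀ γ : ℝ, 0 < γ →
      (IsCDF (fun x => (F x - (1 - γ) * Fb x) / γ) ↔
        ∀ b ∈ {x : ℝ | 0 < μb {x}}, (α - γ) * (μb {b}).toReal ≤ α * (μs {b}).toReal) := by
    intro γ hγ
    rw [hfeq γ]
    exact key_iff μs μb hatomic_b α γ hα.1 hγ
  have halpha : alpha0 F Fb = sInf {γ : ℝ | γ ∈ Set.Ioc (0:ℝ) 1 ∧
      ∀ b ∈ {x : ℝ | 0 < μb {x}}, (α - γ) * (μb {b}).toReal ≤ α * (μs {b}).toReal} := by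
    unfold alpha0
    congr 1
    ext γ
    exact and_congr_right fun hγ => hchar γ hγ.1
  set T := {γ : ℝ | γ ∈ Set.Ioc (0:ℝ) 1 ∧
      ∀ b ∈ {x : ℝ | 0 < μb {x}}, (α - γ) * (μb {b}).toReal ≤ α * (μs {b}).toReal} with hTdef
  constructor
  · -- Case 1
    intro hnsub
    obtain ⟨b0, hb0B, hb0s⟩ := Set.not_subset.mp hnsub
    have hμs0 : μs {b0} = 0 := by
      simpa [not_lt, nonpos_iff_eq_zero] using hb0s
    have hleast : IsLeast T α := by
      constructor
      · refine ⟨hα, fun b hb => ?_⟩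
        rw [sub_self, zero_mul]
        exact mul_nonneg hα.1.le ENNReal.toReal_nonneg
      · rintro γ ⟨hγIoc, hcond⟩
        have h := hcond b0 hb0B
        rw [hμs0] at h
        simp only [ENNReal.toReal_zero, mul_zero] at h
        have htb : 0 < (μb {b0}).toReal :=
          ENNReal.toReal_pos hb0B.ne' (measure_ne_top μb _)
        nlinarith
    rw [halpha]
    exact hleast.csInf_eq
  · -- Case 2
    intro hsub
    set R := (fun x => (μs {x}).toReal / (μb {x}).toReal) '' {x : ℝ | 0 < μb {x}} with hRdef
    have hBne : Set.Nonempty {x : ℝ | 0 < μb {x}} := by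
      by_contra h
      rw [Set.not_nonempty_iff_eq_empty] at h
      have h0 : μb Set.univ = 0 := by
        rw [← Set.compl_empty, ← h]
        exact hatomic_b
      rw [measure_univ] at h0
      exact one_ne_zero h0
    have hRne : R.Nonempty := hBne.image _
    have hRbdd : BddBelow R := by
      refine ⟨0, ?_⟩
      rintro y ⟨x, hx, rfl⟩
      positivity
    set r := sInf R with hrdef
    have hr0 : 0 ≤ r := by
      refine le_csInf hRne ?_
      rintro y ⟨x, hx, rfl⟩
      positivity
    have hr1 : r < 1 := by
      by_contra hr
      push_neg at hr
      apply hne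
      rw [hFs, hFb]
      apply cdf_eq_of_ge_on_atoms μs μb hatomic_b
      intro b hb
      have htb : 0 < (μb {b}).toReal := ENNReal.toReal_pos hb.ne' (measure_ne_top μb _)
      have hmem : (μs {b}).toReal / (μb {b}).toReal ∈ R := ⟨b, hb, rfl⟩
      have h1 : (1:ℝ) ≤ (μs {b}).toReal / (μb {b}).toReal := le_trans hr (csInf_le hRbdd hmem)
      have h2 : (μb {b}).toReal ≤ (μs {b}).toReal := by
        rw [le_div_iff₀ htb] at h1
        linarith
      exact (ENNReal.toReal_le_toReal (measure_ne_top μb _) (measure_ne_top μs _)).mp h2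
    have hleast : IsLeast T (α * (1 - r)) := by
      constructor
      · refine ⟨⟨mul_pos hα.1 (by linarith), by nlinarith [hα.2, hα.1]⟩, fun b hb => ?_⟩
        have htb : 0 < (μb {b}).toReal := ENNReal.toReal_pos hb.ne' (measure_ne_top μb _)
        have hrb : r ≤ (μs {b}).toReal / (μb {b}).toReal := csInf_le hRbdd ⟨b, hb, rfl⟩
        have h2 : r * (μb {b}).toReal ≤ (μs {b}).toReal := by
          rw [← le_div_iff₀ htb]
          exact hrb
        nlinarith [hα.1]
      · rintro γ ⟨hγIoc, hcond⟩
        have hdiv : (α - γ) / α ≤ r := by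
          refine le_csInf hRne ?_
          rintro y ⟨b, hb, rfl⟩
          have htb : 0 < (μb {b}).toReal := ENNReal.toReal_pos hb.ne' (measure_ne_top μb _)
          rw [div_le_div_iff₀ hα.1 htb]
          have := hcond b hb
          nlinarith
        rw [div_le_iff₀ hα.1] at hdiv
        nlinarith
    have heq : alpha0 F Fb = α * (1 - r) := by
      rw [halpha]
      exact hleast.csInf_eq
    refine ⟨heq, ?_, ?_⟩
    · intro h
      rw [heq] at h
      have hαr : α * r = 0 := by nlinarith
      exact (mul_eq_zero.mp hαr).resolve_left (ne_of_gt hα.1)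
    · intro h0
      rw [heq, h0]
      ring
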